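/- arXiv:2403.18404 — 2 statements merged into one kernel-verified Lean document; each statement's English description precedes it below -/
import Mathlib

section
/- (Piecewise-linear lemma) Let M ⊆ 𝕊² be an orthogonal-pair-free set, and define G(M) = ⋃_{y∈M} G(y), M₁ = {z ∈ 𝕊² : G(z) ⊆ G(M)}, M₂ = M₁ \ G(M). Let x, y ∈ M₂ with x ≠ y, and suppose x ∼ y. Then x ≠ −y, d(x,y) < π/2, and arc(x,y) ⊆ M₂. -/
open Metric Set MeasureTheory Filter
open scoped ENNReal Topology

noncomputable section

abbrev E3 := EuclideanSpace ℝ (Fin 3)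

/-- Real inner product on ℝ³. -/
def rinner (p q : E3) : ℝ := inner ℝ p q

/-- The unit sphere 𝕊² in ℝ³. -/
def sphere2 : Set E3 := Metric.sphere (0 : E3) 1

def northPole : E3 := EuclideanSpace.single (2 : Fin 3) (1 : ℝ)
def southPole : E3 := EuclideanSpace.single (2 : Fin 3) (-1 : ℝ)

/-- Geodesic distance on the sphere: d(p,q) = arccos⟨p,q⟩. -/
def gdist (p q : E3) : ℝ := Real.arccos (rinner p q)

/-- Geodesic distance from a point to a set. -/
def gdistToSet (y : E3) (B : Set E3) : ℝ := sInf (gdist y '' B)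

/-- Open geodesic cap/ball of radius r centered at p. -/
def cap (p : E3) (r : ℝ) : Set E3 := {q ∈ sphere2 | gdist p q < r}

/-- A set is orthogonal-pair-free if no two distinct points of it are orthogonal. -/
def OPF (A : Set E3) : Prop :=
  ∀ p ∈ A, ∀ q ∈ A, p ≠ q → rinner p q ≠ 0

/-- The minor great-circle arc arc(x,y) = {u/‖u‖ : u ∈ [x,y]}. -/
def arc (x y : E3) : Set E3 := (fun u : E3 => ‖u‖⁻¹ • u) '' segment ℝ x y

/-- Spherical convexity. -/
def SphConvex (S : Set E3) : Prop :=
  ∀ x ∈ S, ∀ y ∈ S, x ≠ -y → arc x y ⊆ S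

/-- The surface measure σ on 𝕊² (2-dimensional Hausdorff measure, σ(𝕊²) = 4π). -/
def sigmaM : Measure E3 := MeasureTheory.Measure.hausdorffMeasure 2

/-- The normalized surface measure μ, μ(𝕊²) = 1. -/
def muS : Measure E3 := (ENNReal.ofReal (4 * Real.pi))⁻¹ • sigmaM

/-- 𝒜: orthogonal-pair-free subsets of 𝕊² that are finite unions of pairwise
mutually disjoint (disjoint closures) spherically convex sets. -/
def memA (S : Set E3) : Prop :=
  S ⊆ sphere2 ∧ OPF S ∧
  ∃ (n : ℕ) (C : Fin n → Set E3),
    (∀ i, C i ⊆ sphere2 ∧ SphConvex (C i)) ∧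
    (Pairwise fun i j => closure (C i) ∩ closure (C j) = ∅) ∧
    S = ⋃ i, C i

/-- 𝒜ₖ: as 𝒜 but with at most k convex pieces. -/
def memAk (k : ℕ) (S : Set E3) : Prop :=
  S ⊆ sphere2 ∧ OPF S ∧
  ∃ n : ℕ, n ≤ k ∧ ∃ C : Fin n → Set E3,
    (∀ i, C i ⊆ sphere2 ∧ SphConvex (C i)) ∧
    (Pairwise fun i j => closure (C i) ∩ closure (C j) = ∅) ∧
    S = ⋃ i, C i

/-- Azimuthal angle of the (p₁,p₂) components of a point. -/
def azimuth (p : E3) : ℝ := Complex.arg ((p 0 : ℂ) + (p 1 : ℂ) * Complex.I)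

/-- The azimuthal angle lies in [a,b] modulo 2π. -/
def azIn (p : E3) (a b : ℝ) : Prop :=
  ∃ m : ℤ, a ≤ azimuth p + 2 * Real.pi * (m : ℝ) ∧ azimuth p + 2 * Real.pi * (m : ℝ) ≤ b

/-- The level-k dyadic cell with indices i, j. -/
def dyadicCell (k i j : ℕ) : Set E3 :=
  {p ∈ sphere2 |
    ((i : ℝ) * (2 : ℝ)⁻¹ ^ k - 1 ≤ p 2 ∧ p 2 ≤ ((i : ℝ) + 1) * (2 : ℝ)⁻¹ ^ k - 1) ∧
    azIn p (Real.pi / 2 + (j : ℝ) * Real.pi * (2 : ℝ)⁻¹ ^ k)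
           (Real.pi / 2 + ((j : ℝ) + 1) * Real.pi * (2 : ℝ)⁻¹ ^ k)}

/-- c is a level-k dyadic cell. -/
def IsDyadicCell (k : ℕ) (c : Set E3) : Prop :=
  ∃ i j : ℕ, i < 2 ^ (k + 1) ∧ j < 2 ^ (k + 1) ∧ c = dyadicCell k i j

/-- Interior of c relative to 𝕊². -/
def relInterior (c : Set E3) : Set E3 :=
  {x ∈ sphere2 | ∃ U : Set E3, IsOpen U ∧ x ∈ U ∧ U ∩ sphere2 ⊆ c}

/-- Boundary of c relative to 𝕊². -/
def relBd (c : Set E3) : Set E3 := closure c ∩ closure (sphere2 \ c)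

/-- ℬ: orthogonal-pair-free finite unions of pairwise almost disjoint dyadic cells. -/
def memB (S : Set E3) : Prop :=
  OPF S ∧
  ∃ (n : ℕ) (lev : Fin n → ℕ) (c : Fin n → Set E3),
    (∀ i, IsDyadicCell (lev i) (c i)) ∧
    (Pairwise fun i j => relInterior (c i) ∩ relInterior (c j) = ∅) ∧
    S = ⋃ i, c i

/-- The great circle polar to y. -/
def polarGC (y : E3) : Set E3 := {z ∈ sphere2 | rinner y z = 0}

/-- G(M) = ⋃_{y ∈ M} G(y). -/
def GM (M : Set E3) : Set E3 := ⋃ y ∈ M, polarGC y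

/-- M₁ = {z ∈ 𝕊² : G(z) ⊆ G(M)}. -/
def Mone (M : Set E3) : Set E3 := {z ∈ sphere2 | polarGC z ⊆ GM M}

/-- M₂ = M₁ \ G(M). -/
def Mtwo (M : Set E3) : Set E3 := Mone M \ GM M

/-- x ∼ y: joined by a finite piecewise-geodesic path inside A. -/
def chainRel (A : Set E3) (x y : E3) : Prop :=
  ∃ (m : ℕ) (s : ℕ → E3), s 0 = x ∧ s m = y ∧
    ∀ l, l < m → s l ≠ -s (l + 1) ∧ arc (s l) (s (l + 1)) ⊆ A

/-- Hausdorff distance with respect to the geodesic metric. -/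
def geoHausdorff (U V : Set E3) : ℝ :=
  max (⨆ x ∈ U, gdistToSet x V) (⨆ y ∈ V, gdistToSet y U)

/-- Geodesic distance between two sets. -/
def gsetDist (A B : Set E3) : ℝ := sInf (Set.image2 gdist A B)


section Aux

variable {M : Set E3}

lemma rinner_smul_left' (t : ℝ) (p q : E3) : rinner (t • p) q = t * rinner p q :=
  real_inner_smul_left ..

lemma rinner_comm' (p q : E3) : rinner p q = rinner q p := real_inner_comm ..

lemma rinner_comb (a b : ℝ) (p q r : E3) :
    rinner (a • p + b • q) r = a * rinner p r + b * rinner q r := by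
  unfold rinner
  rw [inner_add_left, real_inner_smul_left, real_inner_smul_left]

lemma mem_sphere2_iff {p : E3} : p ∈ sphere2 ↔ ‖p‖ = 1 := mem_sphere_zero_iff_norm

/-- Along a chain of arcs contained in `A`, a sign change of `⟨·,u⟩` forces a
point of `A` orthogonal to `u`. -/
lemma crossing (A : Set E3) (u : E3) :
    ∀ (m : ℕ) (s : ℕ → E3), s 0 ∈ A →
      (∀ l, l < m → arc (s l) (s (l + 1)) ⊆ A) →
      rinner (s 0) u ≤ 0 → 0 ≤ rinner (s m) u →
      ∃ p ∈ A, rinner p u = 0 := by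
  intro m
  induction m with
  | zero =>
    intro s hs0 _ h0 hm
    exact ⟨s 0, hs0, le_antisymm h0 hm⟩
  | succ m ih =>
    intro s hs0 harc h0 hm
    by_cases hsm : 0 ≤ rinner (s m) u
    · exact ih s hs0 (fun l hl => harc l (hl.trans (Nat.lt_succ_self m))) h0 hsm
    · push_neg at hsm
      set a := rinner (s m) u with ha
      set b := rinner (s (m + 1)) u with hb
      have hba : 0 < b - a := by simp only [hb, ha]; linarith
      set t : ℝ := (-a) / (b - a) with htdef
      have ht0 : 0 ≤ t := div_nonneg (by linarith) hba.le
      have ht1 : t ≤ 1 := (div_le_one hba).mpr (by linarith)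
      set v : E3 := (1 - t) • s m + t • s (m + 1) with hv
      have hvseg : v ∈ segment ℝ (s m) (s (m + 1)) :=
        ⟨1 - t, t, by linarith, ht0, by ring, rfl⟩
      refine ⟨‖v‖⁻¹ • v, harc m (Nat.lt_succ_self m) ⟨v, hvseg, rfl⟩, ?_⟩
      have hvu : rinner v u = 0 := by
        have : rinner v u = (1 - t) * a + t * b := by
          rw [hv, rinner_comb, ← ha, ← hb]
        rw [this, htdef]
        field_simp
        ring
      rw [rinner_smul_left', hvu, mul_zero]

lemma Mtwo_subset_sphere2 : Mtwo M ⊆ sphere2 := fun z hz => hz.1.1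

lemma key_arith {a b A B : ℝ} (ha : 0 ≤ a) (hb : 0 ≤ b) (hab : a + b = 1)
    (h : a * A + b * B = 0) : A * B ≤ 0 := by
  by_contra h'
  push_neg at h'
  rcases mul_pos_iff.mp h' with ⟨hA, hB⟩ | ⟨hA, hB⟩
  · nlinarith [mul_nonneg ha hA.le, mul_nonneg hb hB.le]
  · nlinarith [mul_nonneg ha (neg_nonneg.mpr hA.le), mul_nonneg hb (neg_nonneg.mpr hB.le)]

end Aux

/-- Piecewise-linear lemma. -/
theorem stmt11 (M : Set E3) (hM : M ⊆ sphere2) (hOPF : OPF M)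
    (x y : E3) (hx : x ∈ Mtwo M) (hy : y ∈ Mtwo M) (hxy : x ≠ y)
    (hchain : chainRel (Mtwo M) x y) :
    x ≠ -y ∧ gdist x y < Real.pi / 2 ∧ arc x y ⊆ Mtwo M := by
  obtain ⟨m, s, hs0, hsm, hstep⟩ := hchain
  have hxs : ‖x‖ = 1 := mem_sphere2_iff.mp hx.1.1
  have hys : ‖y‖ = 1 := mem_sphere2_iff.mp hy.1.1
  -- the crossing lemma specialized to our chain
  have cross : ∀ u : E3, rinner x u ≤ 0 → 0 ≤ rinner y u →
      ∃ p ∈ Mtwo M, rinner p u = 0 := by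
    intro u h1 h2
    refine crossing (Mtwo M) u m s (hs0 ▸ hx) (fun l hl => (hstep l hl).2) ?_ ?_
    · rw [hs0]; exact h1
    · rw [hsm]; exact h2
  have comb : ∀ u : E3, rinner x u * rinner y u ≤ 0 →
      ∃ p ∈ Mtwo M, rinner p u = 0 := by
    intro u hu
    rcases mul_nonpos_iff.mp hu with ⟨h1, h2⟩ | ⟨h1, h2⟩
    · obtain ⟨p, hp, hpu⟩ := cross (-u) (by rw [show rinner x (-u) = -rinner x u from inner_neg_right ..]; linarith)
        (by rw [show rinner y (-u) = -rinner y u from inner_neg_right ..]; linarith)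
      refine ⟨p, hp, ?_⟩
      have : rinner p (-u) = -rinner p u := inner_neg_right ..
      rw [this] at hpu; linarith
    · exact cross u h1 h2
  -- a point of Mtwo orthogonal to u gives u ∈ GM, and contradiction when u ∈ polarGC x etc.
  have hxx : rinner x x = 1 := by
    rw [rinner, real_inner_self_eq_norm_sq, hxs]; norm_num
  -- Step 1 : 0 < ⟨x, y⟩
  have hpos : 0 < rinner x y := by
    by_contra hle
    push_neg at hle
    obtain ⟨p, hp, hpx⟩ := comb x (by rw [hxx, one_mul, rinner_comm' y x]; exact hle)
    have hpGM : p ∈ GM M := hx.1.2 ⟨hp.1.1, by rw [rinner_comm' x p]; exact hpx⟩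
    exact hp.2 hpGM
  refine ⟨?_, ?_, ?_⟩
  · intro h
    rw [h] at hpos
    have : rinner (-y) y = -1 := by
      rw [show rinner (-y) y = -rinner y y from inner_neg_left ..,
        rinner, real_inner_self_eq_norm_sq, hys]; norm_num
    rw [this] at hpos; linarith
  · rw [gdist, Real.arccos]
    have := Real.arcsin_pos.mpr hpos
    linarith
  · rintro w ⟨v, ⟨a, b, ha, hb, hab, rfl⟩, rfl⟩
    set v : E3 := a • x + b • y with hv
    have hvx : 0 < rinner v x := by
      have : rinner v x = a * 1 + b * rinner x y := by
        rw [hv, rinner_comb, hxx, rinner_comm' y x]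
      rw [this]
      rcases lt_or_eq_of_le ha with h | h
      · nlinarith [mul_nonneg hb hpos.le]
      · nlinarith
    have hvne : v ≠ 0 := by
      intro h
      rw [h] at hvx
      simp [rinner] at hvx
    have hnv : ‖v‖ ≠ 0 := norm_ne_zero_iff.mpr hvne
    have hws : ‖v‖⁻¹ • v ∈ sphere2 := by
      rw [mem_sphere2_iff, norm_smul, norm_inv, norm_norm, inv_mul_cancel₀ hnv]
    -- from orthogonality of w to u, the product of inner products is nonpositive
    have hkey : ∀ u : E3, rinner (‖v‖⁻¹ • v) u = 0 → rinner x u * rinner y u ≤ 0 := by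
      intro u hwu
      rw [rinner_smul_left'] at hwu
      have hvu : rinner v u = 0 := by
        rcases mul_eq_zero.mp hwu with h | h
        · exact absurd h (inv_ne_zero hnv)
        · exact h
      have : a * rinner x u + b * rinner y u = 0 := by
        rw [← hvu, hv, rinner_comb]
      exact key_arith ha hb hab this
    constructor
    · refine ⟨hws, ?_⟩
      rintro u ⟨hus, hwu⟩
      obtain ⟨p, hp, hpu⟩ := comb u (hkey u hwu)
      exact hp.1.2 ⟨hus, (rinner_comm' p u) ▸ hpu⟩
    · intro hwGM
      rw [GM, Set.mem_iUnion₂] at hwGM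
      obtain ⟨m', hm'M, hws', hm'w⟩ := hwGM
      have h0 : rinner (‖v‖⁻¹ • v) m' = 0 := (rinner_comm' _ m') ▸ hm'w
      obtain ⟨p, hp, hpm⟩ := comb m' (hkey m' h0)
      have : p ∈ GM M := by
        rw [GM, Set.mem_iUnion₂]
        exact ⟨m', hm'M, hp.1.1, (rinner_comm' m' p).trans hpm⟩
      exact hp.2 this

end
end

section
/- Let (C_n) be a sequence of nonempty closed spherically convex subsets of 𝕊², each contained in some open hemisphere, and let C* be a nonempty closed subset of 𝕊² such that δ_H(C_n, C*) → 0 as n → ∞. Let y ∈ 𝕊² and 0 < ε < π/2 be such that the open geodesic ball B(y,ε) is contained in C*. Then there exists N such that for all n > N, B(y, ε/2) ⊆ C_n. -/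
open Metric Set MeasureTheory Filter
open scoped ENNReal Topology

noncomputable section

lemma my_norm_one {p : E3} (hp : p ∈ sphere2) : ‖p‖ = 1 := by
  simpa [sphere2] using hp

lemma my_inner_le_one {p q : E3} (hp : ‖p‖ = 1) (hq : ‖q‖ = 1) : |rinner p q| ≤ 1 := by
  have h := abs_real_inner_le_norm p q
  rw [hp, hq] at h
  simpa [rinner] using h

lemma my_arccos_le {t x : ℝ} (ht : -1 ≤ t) (ht1 : t ≤ 1) (hx0 : 0 ≤ x) (hxπ : x ≤ Real.pi)
    (h : Real.cos x ≤ t) : Real.arccos t ≤ x := by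
  by_contra hlt
  push_neg at hlt
  have h2 := Real.cos_lt_cos_of_nonneg_of_le_pi hx0 (Real.arccos_le_pi t) hlt
  rw [Real.cos_arccos ht ht1] at h2
  linarith

lemma my_chord_le {p q : E3} (hp : ‖p‖ = 1) (hq : ‖q‖ = 1) : ‖p - q‖ ≤ gdist p q := by
  have hb := my_inner_le_one hp hq
  obtain ⟨hb1, hb2⟩ := abs_le.mp hb
  have hg0 : 0 ≤ gdist p q := Real.arccos_nonneg _
  have hgπ : gdist p q ≤ Real.pi := Real.arccos_le_pi _
  have hcos : Real.cos (gdist p q) = rinner p q := Real.cos_arccos hb1 hb2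
  have hsq : ‖p - q‖ ^ 2 = 2 - 2 * rinner p q := by
    have h0 := norm_sub_sq_real p q
    rw [hp, hq] at h0
    simp only [rinner]
    rw [h0]; ring
  set g := gdist p q with hgdef
  have hhalf : Real.sin (g / 2) ^ 2 = (1 - Real.cos g) / 2 := by
    have h1 := Real.cos_two_mul (g / 2)
    rw [show 2 * (g / 2) = g by ring] at h1
    have h2 := Real.sin_sq_add_cos_sq (g / 2)
    linarith
  have hs0 : 0 ≤ Real.sin (g / 2) :=
    Real.sin_nonneg_of_nonneg_of_le_pi (by linarith) (by linarith [Real.pi_pos])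
  have hsle : Real.sin (g / 2) ≤ g / 2 := Real.sin_le (by linarith)
  have hmul : Real.sin (g / 2) * Real.sin (g / 2) ≤ g / 2 * (g / 2) :=
    mul_le_mul hsle hsle hs0 (by linarith)
  have hsq2 : ‖p - q‖ ^ 2 ≤ g ^ 2 := by nlinarith [hmul]
  nlinarith [norm_nonneg (p - q), hg0, hsq2]

lemma my_gdistToSet_le_geoH {U V : Set E3} (hU : U.Nonempty) {p : E3} (hp : p ∈ V) :
    gdistToSet p U ≤ geoHausdorff U V := by
  have hbdd : ∀ z : E3, (⨆ _ : z ∈ V, gdistToSet z U) ≤ Real.pi := by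
    intro z
    rcases Classical.em (z ∈ V) with h | h
    · rw [ciSup_pos h]
      obtain ⟨u0, hu0⟩ := hU
      have h1 : gdistToSet z U ≤ gdist z u0 := by
        simp only [gdistToSet]
        refine csInf_le ⟨0, ?_⟩ ⟨u0, hu0, rfl⟩
        rintro r ⟨w, _, rfl⟩
        exact Real.arccos_nonneg _
      exact h1.trans (Real.arccos_le_pi _)
    · haveI : IsEmpty (z ∈ V) := ⟨h⟩
      rw [Real.iSup_of_isEmpty]
      exact Real.pi_pos.le
  have hB : BddAbove (Set.range fun z : E3 => ⨆ _ : z ∈ V, gdistToSet z U) := by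
    refine ⟨Real.pi, ?_⟩
    rintro r ⟨z, rfl⟩
    exact hbdd z
  have h2 : gdistToSet p U ≤ ⨆ z ∈ V, gdistToSet z U := by
    have h3 := le_ciSup hB p
    rwa [ciSup_pos hp] at h3
  simp only [geoHausdorff]
  exact h2.trans (le_max_right _ _)

lemma my_exists_close {U : Set E3} (hU : U.Nonempty) {p : E3} {d : ℝ}
    (h : gdistToSet p U < d) : ∃ x ∈ U, gdist p x < d := by
  simp only [gdistToSet] at h
  obtain ⟨r, hr, hrd⟩ := exists_lt_of_csInf_lt (hU.image _) h
  obtain ⟨x, hx, rfl⟩ := hr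
  exact ⟨x, hx, hrd⟩

lemma my_cone_convex {Cn : Set E3} (hconv : SphConvex Cn) {v : E3}
    (hv : ∀ x ∈ Cn, rinner x v > 0) (x₀ : E3) (hx₀ : x₀ ∈ Cn) :
    Convex ℝ {w : E3 | ∃ t : ℝ, 0 ≤ t ∧ ∃ x ∈ Cn, w = t • x} := by
  have hzero : (0 : E3) ∈ {w : E3 | ∃ t : ℝ, 0 ≤ t ∧ ∃ x ∈ Cn, w = t • x} :=
    ⟨0, le_refl _, x₀, hx₀, (zero_smul ℝ x₀).symm⟩
  rintro w1 ⟨t1, ht1, x1, hx1, rfl⟩ w2 ⟨t2, ht2, x2, hx2, rfl⟩ a b ha hb hab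
  have hα0 : 0 ≤ a * t1 := mul_nonneg ha ht1
  have hβ0 : 0 ≤ b * t2 := mul_nonneg hb ht2
  have hkey : a • t1 • x1 + b • t2 • x2 = (a * t1) • x1 + (b * t2) • x2 := by
    simp [smul_smul]
  rw [hkey]
  set α := a * t1 with hαdef
  set β := b * t2 with hβdef
  rcases eq_or_lt_of_le hα0 with hα' | hα'
  · exact ⟨β, hβ0, x2, hx2, by rw [← hα']; simp⟩
  rcases eq_or_lt_of_le hβ0 with hβ' | hβ'
  · exact ⟨α, hα0, x1, hx1, by rw [← hβ']; simp⟩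
  set s := α + β with hsdef
  have hs : 0 < s := by positivity
  set m := (α / s) • x1 + (β / s) • x2 with hmdef
  have hseg : m ∈ segment ℝ x1 x2 :=
    ⟨α / s, β / s, by positivity, by positivity, by rw [← add_div]; exact div_self (ne_of_gt hs), rfl⟩
  have hx12 : x1 ≠ -x2 := by
    intro h
    have h1 := hv x1 hx1
    have h2 := hv x2 hx2
    rw [h] at h1
    simp only [rinner, inner_neg_left] at h1
    simp only [rinner] at h2
    linarith
  have harc : ‖m‖⁻¹ • m ∈ Cn := hconv x1 hx1 x2 hx2 hx12 ⟨m, hseg, rfl⟩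
  have hsm : s • m = α • x1 + β • x2 := by
    rw [hmdef, smul_add, smul_smul, smul_smul,
      mul_div_cancel₀ _ (ne_of_gt hs), mul_div_cancel₀ _ (ne_of_gt hs)]
  by_cases hm0 : m = 0
  · rw [← hsm, hm0, smul_zero]
    exact hzero
  · have hnm : ‖m‖ ≠ 0 := norm_ne_zero_iff.mpr hm0
    refine ⟨s * ‖m‖, by positivity, ‖m‖⁻¹ • m, harc, ?_⟩
    rw [smul_smul, ← hsm]
    congr 1
    field_simp

lemma my_not_mem_closure {Cn : Set E3} (hCc : IsClosed Cn) (hne : Cn.Nonempty)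
    (hsub : Cn ⊆ sphere2) {q : E3} (hq : ‖q‖ = 1) (hqn : q ∉ Cn) :
    q ∉ closure {w : E3 | ∃ t : ℝ, 0 ≤ t ∧ ∃ x ∈ Cn, w = t • x} := by
  have hd : 0 < Metric.infDist q Cn := (hCc.notMem_iff_infDist_pos hne).mp hqn
  set d := Metric.infDist q Cn with hddef
  set r2 := min 1 (d ^ 2 / 2) with hr2def
  have hr2pos : 0 < r2 := lt_min one_pos (by positivity)
  have hkey : ∀ w ∈ {w : E3 | ∃ t : ℝ, 0 ≤ t ∧ ∃ x ∈ Cn, w = t • x},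
      r2 ≤ ‖q - w‖ ^ 2 := by
    rintro w ⟨t, ht, x, hx, rfl⟩
    have hxn : ‖x‖ = 1 := my_norm_one (hsub hx)
    obtain ⟨hc1, hc2⟩ := abs_le.mp (my_inner_le_one hq hxn)
    have hsq : ‖q - t • x‖ ^ 2 = 1 - 2 * (t * rinner q x) + t ^ 2 := by
      have h0 := norm_sub_sq_real q (t • x)
      rw [hq, norm_smul, Real.norm_eq_abs, hxn, real_inner_smul_right] at h0
      simp only [rinner]
      rw [h0, mul_one, sq_abs]
      ring
    rw [hsq]
    rcases le_or_gt (rinner q x) 0 with hc0 | hc0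
    · have h1 : (1 : ℝ) ≤ 1 - 2 * (t * rinner q x) + t ^ 2 := by
        have htc : 0 ≤ t * -rinner q x := mul_nonneg ht (by linarith)
        nlinarith [sq_nonneg t, htc]
      linarith [min_le_left (1 : ℝ) (d ^ 2 / 2)]
    · have hdx : d ≤ ‖q - x‖ := by
        rw [hddef, ← dist_eq_norm]
        exact Metric.infDist_le_dist_of_mem hx
      have hqx : ‖q - x‖ ^ 2 = 2 - 2 * rinner q x := by
        have h0 := norm_sub_sq_real q x
        rw [hq, hxn] at h0
        simp only [rinner]
        rw [h0]; ring
      have hd0 : 0 ≤ d := Metric.infDist_nonneg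
      have hdd : d * d ≤ ‖q - x‖ * ‖q - x‖ := mul_le_mul hdx hdx hd0 (norm_nonneg _)
      have hd2 : d ^ 2 ≤ 2 - 2 * rinner q x := by nlinarith [hdd]
      have hmr := min_le_right (1 : ℝ) (d ^ 2 / 2)
      have hcc : rinner q x * rinner q x ≤ rinner q x :=
        mul_le_of_le_one_left hc0.le hc2
      nlinarith [sq_nonneg (t - rinner q x), hcc]
  intro hmem
  obtain ⟨w, hw, hdist⟩ :=
    Metric.mem_closure_iff.mp hmem (Real.sqrt r2) (Real.sqrt_pos.mpr hr2pos)
  have h1 : dist q w ^ 2 < r2 := by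
    have hmul : dist q w * dist q w < Real.sqrt r2 * Real.sqrt r2 :=
      mul_lt_mul'' hdist hdist dist_nonneg dist_nonneg
    nlinarith [Real.sq_sqrt hr2pos.le, hmul]
  rw [dist_eq_norm] at h1
  exact absurd (hkey w hw) (by linarith)

set_option maxHeartbeats 1000000 in
lemma my_point (q z₀ y : E3) (hq : ‖q‖ = 1) (hz : ‖z₀‖ = 1) (hy : ‖y‖ = 1)
    {ρ ε : ℝ} (hρ0 : 0 < ρ) (hρ8 : ρ ≤ Real.pi / 8)
    (hs₀pos : 0 < rinner q z₀)
    (hsum : Real.arccos (rinner y q) + ρ < ε) (hεhalf : ε ≤ Real.pi / 2) :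
    ∃ p : E3, ‖p‖ = 1 ∧ Real.arccos (rinner y p) < ε ∧ Real.sin ρ ≤ rinner p z₀ := by
  have hπ := Real.pi_pos
  have hπ315 := Real.pi_lt_d2
  have hρπ : ρ < Real.pi := by linarith
  have hsρ0 : 0 < Real.sin ρ := Real.sin_pos_of_pos_of_lt_pi hρ0 hρπ
  have hsρ1 : Real.sin ρ ≤ 1 := Real.sin_le_one ρ
  have hsincos : Real.sin ρ ≤ Real.cos ρ := by
    have h1 : Real.sin ρ ≤ ρ := Real.sin_le hρ0.le
    have h2 : 1 - ρ ^ 2 / 2 ≤ Real.cos ρ := Real.one_sub_sq_div_two_le_cos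
    have hρB : ρ ≤ 0.4 := by linarith
    have hρsq : ρ * ρ ≤ 0.4 * 0.4 := mul_le_mul hρB hρB hρ0.le (by norm_num)
    linarith only [h1, h2, hρB, hρsq]
  set s₀ := rinner q z₀ with hs₀def
  obtain ⟨hs₀1, hs₀2⟩ := abs_le.mp (my_inner_le_one hq hz)
  have hinq : (inner ℝ q z₀ : ℝ) = s₀ := by
    simp only [rinner] at hs₀def
    exact hs₀def.symm
  have hqq : (inner ℝ q q : ℝ) = 1 := by
    rw [real_inner_self_eq_norm_sq, hq]; norm_num
  have hzz : (inner ℝ z₀ z₀ : ℝ) = 1 := by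
    rw [real_inner_self_eq_norm_sq, hz]; norm_num
  set v : E3 := z₀ - s₀ • q with hvdef
  have hqv : (inner ℝ q v : ℝ) = 0 := by
    rw [hvdef, inner_sub_right, real_inner_smul_right, hqq, hinq]; ring
  by_cases hv0 : v = 0
  · have hz₀eq : z₀ = s₀ • q := sub_eq_zero.mp hv0
    have hs₀eq : s₀ = 1 := by
      have h1 : ‖z₀‖ = |s₀| * ‖q‖ := by rw [hz₀eq, norm_smul, Real.norm_eq_abs]
      rw [hz, hq, mul_one, abs_of_pos hs₀pos] at h1
      linarith
    refine ⟨q, hq, by linarith, ?_⟩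
    rw [← hs₀def, hs₀eq]
    exact hsρ1
  · have hh0 : 0 < ‖v‖ := norm_pos_iff.mpr hv0
    set h := ‖v‖ with hhdef
    have hh2 : h ^ 2 = 1 - s₀ ^ 2 := by
      have h0 := norm_sub_sq_real z₀ (s₀ • q)
      rw [hz, norm_smul, Real.norm_eq_abs, hq, real_inner_smul_right] at h0
      have hcomm : (inner ℝ z₀ q : ℝ) = s₀ := by rw [real_inner_comm]; exact hinq
      rw [hcomm] at h0
      rw [hhdef, hvdef, h0, mul_one, sq_abs]
      ring
    have hvz : (inner ℝ v z₀ : ℝ) = 1 - s₀ ^ 2 := by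
      rw [hvdef, inner_sub_left, real_inner_smul_left, hzz, hinq]; ring
    set cρ := Real.cos ρ with hcρdef
    set sρ := Real.sin ρ with hsρdef
    set p : E3 := cρ • q + (sρ / h) • v with hpdef
    have hpz : rinner p z₀ = cρ * s₀ + sρ * h := by
      simp only [rinner, hpdef]
      rw [inner_add_left, real_inner_smul_left, real_inner_smul_left, hvz, hinq, ← hh2]
      field_simp
    have hpn : ‖p‖ = 1 := by
      have h0 := norm_add_sq_real (cρ • q) ((sρ / h) • v)
      rw [norm_smul, norm_smul, Real.norm_eq_abs, Real.norm_eq_abs, hq, ← hhdef,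
        real_inner_smul_left, real_inner_smul_right, hqv] at h0
      have hp2 : ‖p‖ ^ 2 = 1 := by
        rw [hpdef, h0]
        have habs : (|sρ / h| * h) ^ 2 = sρ ^ 2 := by
          rw [mul_pow, sq_abs, div_pow]
          field_simp
        have hsc := Real.sin_sq_add_cos_sq ρ
        rw [← hsρdef, ← hcρdef] at hsc
        rw [habs, mul_one, sq_abs]
        linear_combination hsc
      rw [show ‖p‖ = Real.sqrt (‖p‖ ^ 2) from (Real.sqrt_sq (norm_nonneg p)).symm, hp2,
        Real.sqrt_one]
    set cy := rinner y q with hcydef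
    obtain ⟨hcy1, hcy2⟩ := abs_le.mp (my_inner_le_one hy hq)
    have hinyq : (inner ℝ y q : ℝ) = cy := by
      simp only [rinner] at hcydef
      exact hcydef.symm
    set θ := Real.arccos cy with hθdef
    have hθ0 : 0 ≤ θ := Real.arccos_nonneg _
    have hθcos : Real.cos θ = cy := Real.cos_arccos hcy1 hcy2
    have hθsin : Real.sin θ = Real.sqrt (1 - cy ^ 2) := Real.sin_arccos cy
    have hynq : ‖y - cy • q‖ = Real.sqrt (1 - cy ^ 2) := by
      have h0 := norm_sub_sq_real y (cy • q)
      rw [hy, norm_smul, Real.norm_eq_abs, hq, real_inner_smul_right, hinyq,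
        mul_one, sq_abs] at h0
      rw [show ‖y - cy • q‖ = Real.sqrt (‖y - cy • q‖ ^ 2) from
        (Real.sqrt_sq (norm_nonneg _)).symm, h0]
      congr 1
      ring
    have hyv : |(inner ℝ y v : ℝ)| ≤ Real.sin θ * h := by
      have heq : (inner ℝ y v : ℝ) = (inner ℝ (y - cy • q) v : ℝ) := by
        rw [inner_sub_left, real_inner_smul_left, hqv, mul_zero, sub_zero]
      rw [heq]
      calc |(inner ℝ (y - cy • q) v : ℝ)| ≤ ‖y - cy • q‖ * ‖v‖ := abs_real_inner_le_norm _ _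
        _ = Real.sin θ * h := by rw [hynq, hθsin, hhdef]
    have hyp : Real.cos (θ + ρ) ≤ rinner y p := by
      have h0 : rinner y p = cρ * cy + sρ / h * (inner ℝ y v : ℝ) := by
        simp only [rinner, hpdef]
        rw [inner_add_right, real_inner_smul_right, real_inner_smul_right, hinyq]
      have h1 : -(Real.sin θ * h) ≤ (inner ℝ y v : ℝ) := by
        have := neg_abs_le (inner ℝ y v : ℝ)
        linarith
      have h2 : 0 ≤ sρ / h := by positivity
      have h3 : sρ / h * (-(Real.sin θ * h)) ≤ sρ / h * (inner ℝ y v : ℝ) :=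
        mul_le_mul_of_nonneg_left h1 h2
      have h4 : sρ / h * (-(Real.sin θ * h)) = -(sρ * Real.sin θ) := by
        field_simp
      rw [Real.cos_add, hθcos, h0, ← hsρdef]
      rw [h4] at h3
      linarith
    have hsum' : θ + ρ < ε := by
      rw [hθdef, hcydef]
      exact hsum
    obtain ⟨hyp1, hyp2⟩ := abs_le.mp (my_inner_le_one hy hpn)
    refine ⟨p, hpn, ?_, ?_⟩
    · have h5 : Real.arccos (rinner y p) ≤ θ + ρ :=
        my_arccos_le hyp1 hyp2 (by linarith) (by linarith) hyp
      linarith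
    · rw [hpz]
      have hh1 : h ≤ 1 := by
        have hss : 0 ≤ s₀ * s₀ := mul_nonneg hs₀pos.le hs₀pos.le
        nlinarith only [hss, hh2, hh0]
      have e0 : h * h ≤ h := mul_le_of_le_one_left hh0.le hh1
      have e2 : s₀ * s₀ ≤ s₀ := mul_le_of_le_one_left hs₀pos.le hs₀2
      have h1h : 1 - h ≤ s₀ := by linarith only [e0, hh2, e2]
      have e3 : sρ * (1 - h) ≤ sρ * s₀ := mul_le_mul_of_nonneg_left h1h hsρ0.le
      have e4 : sρ * s₀ ≤ cρ * s₀ := mul_le_mul_of_nonneg_right hsincos hs₀pos.le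
      linarith only [e3, e4]


set_option maxHeartbeats 1000000 in
/-- a geodesic ball contained in the Hausdorff limit is eventually
(at half its radius) contained in the approximating convex sets. -/
theorem stmt12 (C : ℕ → Set E3) (Cstar : Set E3)
    (hC : ∀ n, (C n).Nonempty ∧ IsClosed (C n) ∧ C n ⊆ sphere2 ∧ SphConvex (C n) ∧
      ∃ v ∈ sphere2, ∀ q ∈ C n, rinner q v > 0)
    (hCs : Cstar.Nonempty ∧ IsClosed Cstar ∧ Cstar ⊆ sphere2)
    (hconv : Filter.Tendsto (fun n => geoHausdorff (C n) Cstar) Filter.atTop (nhds 0))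
    (y : E3) (hy : y ∈ sphere2) (ε : ℝ) (hε : 0 < ε) (hε' : ε < Real.pi / 2)
    (hball : cap y ε ⊆ Cstar) :
    ∃ N : ℕ, ∀ n > N, cap y (ε / 2) ⊆ C n := by
  classical
  obtain ⟨hCsne, hCscl, hCssub⟩ := hCs
  have hπ := Real.pi_pos
  set ρ : ℝ := ε / 4 with hρdef
  have hρ0 : 0 < ρ := by rw [hρdef]; linarith
  have hρ8 : ρ ≤ Real.pi / 8 := by rw [hρdef]; linarith
  set δ : ℝ := Real.sin ρ with hδdef
  have hδ0 : 0 < δ := Real.sin_pos_of_pos_of_lt_pi hρ0 (by linarith)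
  obtain ⟨N, hN⟩ := Filter.eventually_atTop.mp (hconv.eventually_lt_const hδ0)
  refine ⟨N, fun n hn => ?_⟩
  have hHn : geoHausdorff (C n) Cstar < δ := hN n hn.le
  obtain ⟨hCne, hCcl, hCsub, hCsph, v, hvs, hvpos⟩ := hC n
  intro q hqcap
  obtain ⟨hq2, hqlt⟩ := hqcap
  by_contra hqn
  have hqnorm : ‖q‖ = 1 := my_norm_one hq2
  obtain ⟨x₀, hx₀⟩ := hCne
  have hKconv : Convex ℝ {w : E3 | ∃ t : ℝ, 0 ≤ t ∧ ∃ x ∈ C n, w = t • x} :=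
    my_cone_convex hCsph hvpos x₀ hx₀
  have hqK : q ∉ closure {w : E3 | ∃ t : ℝ, 0 ≤ t ∧ ∃ x ∈ C n, w = t • x} :=
    my_not_mem_closure hCcl ⟨x₀, hx₀⟩ hCsub hqnorm hqn
  obtain ⟨f, u, hfu, huq⟩ :=
    geometric_hahn_banach_closed_point hKconv.closure isClosed_closure hqK
  have h0K : (0 : E3) ∈ {w : E3 | ∃ t : ℝ, 0 ≤ t ∧ ∃ x ∈ C n, w = t • x} :=
    ⟨0, le_refl _, x₀, hx₀, (zero_smul ℝ x₀).symm⟩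
  have hu0 : 0 < u := by
    have := hfu 0 (subset_closure h0K)
    simpa using this
  have hfx : ∀ x ∈ C n, f x ≤ 0 := by
    intro x hx
    by_contra hpos
    push_neg at hpos
    have hmem : ((u + 1) / f x) • x ∈ {w : E3 | ∃ t : ℝ, 0 ≤ t ∧ ∃ x ∈ C n, w = t • x} :=
      ⟨(u + 1) / f x, by positivity, x, hx, rfl⟩
    have h2 := hfu _ (subset_closure hmem)
    rw [_root_.map_smul, smul_eq_mul, div_mul_cancel₀ _ (ne_of_gt hpos)] at h2
    linarith
  have hfq : 0 < f q := lt_trans hu0 huq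
  set z := (InnerProductSpace.toDual ℝ E3).symm f with hzdef
  have hzapp : ∀ x : E3, (inner ℝ z x : ℝ) = f x := fun x => InnerProductSpace.toDual_symm_apply
  have hzne : z ≠ 0 := by
    intro h0
    rw [← hzapp q, h0, inner_zero_left] at hfq
    exact lt_irrefl 0 hfq
  set z₀ : E3 := ‖z‖⁻¹ • z with hz₀def
  have hz₀n : ‖z₀‖ = 1 := norm_smul_inv_norm hzne
  have hzn0 : (0 : ℝ) < ‖z‖ := norm_pos_iff.mpr hzne
  have hqz₀ : 0 < rinner q z₀ := by
    have heq : rinner q z₀ = ‖z‖⁻¹ * f q := by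
      simp only [rinner, hz₀def]
      rw [real_inner_smul_right, real_inner_comm, hzapp]
    rw [heq]
    positivity
  have hxz₀ : ∀ x ∈ C n, rinner x z₀ ≤ 0 := by
    intro x hx
    have heq : rinner x z₀ = ‖z‖⁻¹ * f x := by
      simp only [rinner, hz₀def]
      rw [real_inner_smul_right, real_inner_comm, hzapp]
    rw [heq]
    exact mul_nonpos_of_nonneg_of_nonpos (by positivity) (hfx x hx)
  have hynorm : ‖y‖ = 1 := my_norm_one hy
  have hsum : Real.arccos (rinner y q) + ρ < ε := by
    have h0 : gdist y q < ε / 2 := hqlt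
    simp only [gdist] at h0
    rw [hρdef]
    linarith
  obtain ⟨p, hpn, hpθ, hpz⟩ :=
    my_point q z₀ y hqnorm hz₀n hynorm hρ0 hρ8 hqz₀ hsum hε'.le
  have hps : p ∈ sphere2 := by simp [sphere2, hpn]
  have hpC : p ∈ Cstar := hball ⟨hps, by simp only [gdist]; exact hpθ⟩
  have hle : gdistToSet p (C n) ≤ geoHausdorff (C n) Cstar :=
    my_gdistToSet_le_geoH ⟨x₀, hx₀⟩ hpC
  obtain ⟨x, hx, hgd⟩ := my_exists_close ⟨x₀, hx₀⟩ (lt_of_le_of_lt hle hHn)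
  have hxn : ‖x‖ = 1 := my_norm_one (hCsub hx)
  have hchord : ‖p - x‖ ≤ gdist p x := my_chord_le hpn hxn
  have hsplit : rinner p z₀ = rinner x z₀ + (inner ℝ (p - x) z₀ : ℝ) := by
    simp only [rinner]
    rw [inner_sub_left]
    ring
  have hCS : (inner ℝ (p - x) z₀ : ℝ) ≤ ‖p - x‖ := by
    have h0 := real_inner_le_norm (p - x) z₀
    rwa [hz₀n, mul_one] at h0
  have hlt : rinner p z₀ < δ := by
    rw [hsplit]
    have h0 := hxz₀ x hx
    linarith
  rw [hδdef] at hlt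
  linarith


end
end
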